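/- arXiv:2211.00876 — 3 statements merged into one kernel-verified Lean document; each statement's English description precedes it below -/
import Mathlib

section
/- The shifted function F^L(x) − 2^{−2L−2} satisfies 0 ≤ x² − (F^L(x) − 2^{−2L−2}) ≤ 2^{−2L−2} for all x ∈ [0,1], and equality x² = F^L(x) − 2^{−2L−2} holds if and only if x = i/2^L + 1/2^{L+1} for some i ∈ {0, 1, …, 2^L − 1}. -/
/-- The tooth function `G(x) = min (2x) (2(1-x))`. -/
noncomputable def sawG (x : ℝ) : ℝ := min (2 * x) (2 * (1 - x))

/-- The sawtooth approximation `F^L(x) = x - ∑_{j=1}^L 2^{-2j} G^j(x)`. -/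
noncomputable def sawF (L : ℕ) (x : ℝ) : ℝ :=
  x - ∑ j ∈ Finset.Icc 1 L, (2 : ℝ) ^ (-(2 * (j : ℤ))) * sawG^[j] x

lemma sawG_of_le {x : ℝ} (h : x ≤ 1/2) : sawG x = 2 * x :=
  min_eq_left (by linarith)

lemma sawG_of_ge {x : ℝ} (h : 1/2 ≤ x) : sawG x = 2 * (1 - x) :=
  min_eq_right (by linarith)

lemma sawG_mem {x : ℝ} (hx : x ∈ Set.Icc (0:ℝ) 1) : sawG x ∈ Set.Icc (0:ℝ) 1 := by
  obtain ⟨h0, h1⟩ := hx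
  rcases le_or_gt x (1/2) with h | h
  · rw [sawG_of_le h]; constructor <;> linarith
  · rw [sawG_of_ge h.le]; constructor <;> linarith

lemma sawG_iter_mem (L : ℕ) {x : ℝ} (hx : x ∈ Set.Icc (0:ℝ) 1) :
    sawG^[L] x ∈ Set.Icc (0:ℝ) 1 := by
  induction L generalizing x with
  | zero => simpa using hx
  | succ L ih => rw [Function.iterate_succ_apply]; exact ih (sawG_mem hx)

lemma two_zpow_neg_two_mul (n : ℕ) : (2:ℝ) ^ (-(2 * (n : ℤ))) = (1/4 : ℝ) ^ n := by
  rw [show -(2 * (n : ℤ)) = (-2) * (n : ℤ) by ring, zpow_mul]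
  rw [show ((2:ℝ) ^ (-2 : ℤ)) = (1/4 : ℝ) by norm_num, zpow_natCast]

lemma sawF_key (L : ℕ) {x : ℝ} (hx : x ∈ Set.Icc (0:ℝ) 1) :
    sawF L x - x ^ 2 = (1/4 : ℝ) ^ L * (sawG^[L] x * (1 - sawG^[L] x)) := by
  induction L with
  | zero => simp [sawF]; ring
  | succ L ih =>
    have hsum : sawF (L + 1) x
        = sawF L x - (2:ℝ) ^ (-(2 * ((L+1 : ℕ) : ℤ))) * sawG^[L+1] x := by
      unfold sawF
      rw [Finset.sum_Icc_succ_top (by omega : 1 ≤ L + 1)]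
      ring
    have hF : sawF L x = x ^ 2 + (1/4 : ℝ) ^ L * (sawG^[L] x * (1 - sawG^[L] x)) := by
      linarith
    rw [hsum, hF, two_zpow_neg_two_mul, Function.iterate_succ_apply']
    set u := sawG^[L] x with hu
    obtain ⟨hu0, hu1⟩ := sawG_iter_mem L hx
    rcases le_or_gt u (1/2) with h | h
    · rw [sawG_of_le h]; ring
    · rw [sawG_of_ge h.le]; ring

lemma sawG_iter_half_iff (L : ℕ) : ∀ x ∈ Set.Icc (0:ℝ) 1,
    (sawG^[L] x = 1/2 ↔ ∃ i : ℕ, i < 2 ^ L ∧ x = (i : ℝ) / 2 ^ L + 1 / 2 ^ (L + 1)) := by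
  induction L with
  | zero =>
    intro x _
    simp only [Function.iterate_zero_apply, pow_zero, pow_one]
    constructor
    · intro h; exact ⟨0, by norm_num, by rw [h]; norm_num⟩
    · rintro ⟨i, hi, rfl⟩
      interval_cases i
      norm_num
  | succ L ih =>
    intro x hx
    have hGm := sawG_mem hx
    rw [Function.iterate_succ_apply, ih (sawG x) hGm]
    have h2L : (0:ℝ) < 2 ^ L := by positivity
    constructor
    · rintro ⟨i, hi, hGi⟩
      have hiR : (i:ℝ) + 1 ≤ 2^L := by exact_mod_cast hi
      rcases le_or_gt x (1/2) with h | h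
      · refine ⟨i, by calc i < 2^L := hi
          _ ≤ 2^(L+1) := Nat.pow_le_pow_right (by norm_num) (by omega), ?_⟩
        rw [sawG_of_le h] at hGi
        simp only [pow_succ] at hGi ⊢
        field_simp at hGi ⊢
        nlinarith [hGi, h2L]
      · have hi1 : i + 1 ≤ 2^(L+1) := by
          have : 2^L ≤ 2^(L+1) := Nat.pow_le_pow_right (by norm_num) (by omega)
          omega
        refine ⟨2^(L+1) - 1 - i, by omega, ?_⟩
        rw [sawG_of_ge h.le] at hGi
        have hcast : ((2^(L+1) - 1 - i : ℕ) : ℝ) = 2^(L+1) - 1 - (i:ℝ) := by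
          rw [Nat.sub_sub, Nat.cast_sub (by omega)]
          push_cast; ring
        rw [hcast]
        simp only [pow_succ] at hGi ⊢
        field_simp at hGi ⊢
        nlinarith [hGi, h2L]
    · rintro ⟨i, hi, rfl⟩
      have hiR : (i:ℝ) + 1 ≤ 2^(L+1) := by exact_mod_cast hi
      rcases lt_or_ge i (2^L) with h | h
      · have hiR' : (i:ℝ) + 1 ≤ 2^L := by exact_mod_cast h
        have hxle : (i : ℝ) / 2 ^ (L+1) + 1 / 2 ^ (L + 1 + 1) ≤ 1/2 := by
          simp only [pow_succ]
          rw [div_add_div _ _ (by positivity) (by positivity), div_le_iff₀ (by positivity)]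
          nlinarith [h2L]
        refine ⟨i, h, ?_⟩
        rw [sawG_of_le hxle]
        simp only [pow_succ]
        field_simp
      · have hiR' : (2^L : ℝ) ≤ i := by exact_mod_cast h
        have hxge : (1:ℝ)/2 ≤ (i : ℝ) / 2 ^ (L+1) + 1 / 2 ^ (L + 1 + 1) := by
          simp only [pow_succ]
          rw [div_add_div _ _ (by positivity) (by positivity), le_div_iff₀ (by positivity)]
          nlinarith [h2L]
        refine ⟨2^(L+1) - 1 - i, by omega, ?_⟩
        rw [sawG_of_ge hxge]
        have hcast : ((2^(L+1) - 1 - i : ℕ) : ℝ) = 2^(L+1) - 1 - (i:ℝ) := by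
          rw [Nat.sub_sub, Nat.cast_sub (by omega)]
          push_cast; ring
        rw [hcast]
        simp only [pow_succ]
        field_simp
        ring

/-- The shifted function `F^L(x) - 2^{-2L-2}` satisfies
`0 ≤ x² - (F^L(x) - 2^{-2L-2}) ≤ 2^{-2L-2}` on `[0,1]`, with equality
`x² = F^L(x) - 2^{-2L-2}` if and only if `x = i/2^L + 1/2^{L+1}` for some
`i ∈ {0, …, 2^L - 1}`. -/
theorem sawF_shifted (L : ℕ) (x : ℝ) (hx : x ∈ Set.Icc (0 : ℝ) 1) :
    (0 ≤ x ^ 2 - (sawF L x - (2 : ℝ) ^ (-(2 * (L : ℤ)) - 2)) ∧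
      x ^ 2 - (sawF L x - (2 : ℝ) ^ (-(2 * (L : ℤ)) - 2)) ≤
        (2 : ℝ) ^ (-(2 * (L : ℤ)) - 2)) ∧
    (x ^ 2 = sawF L x - (2 : ℝ) ^ (-(2 * (L : ℤ)) - 2) ↔
      ∃ i : ℕ, i < 2 ^ L ∧ x = (i : ℝ) / 2 ^ L + 1 / 2 ^ (L + 1)) := by
  have hc : (2 : ℝ) ^ (-(2 * (L : ℤ)) - 2) = (1/4 : ℝ) ^ L * (1/4) := by
    rw [sub_eq_add_neg, zpow_add₀ (by norm_num : (2:ℝ) ≠ 0), two_zpow_neg_two_mul]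
    norm_num
  set u := sawG^[L] x with hu
  obtain ⟨hu0, hu1⟩ := sawG_iter_mem L hx
  have hkey := sawF_key L hx
  have hexpr : x ^ 2 - (sawF L x - (2 : ℝ) ^ (-(2 * (L : ℤ)) - 2))
      = (1/4 : ℝ) ^ L * (u - 1/2) ^ 2 := by
    rw [hc]; rw [← hu] at hkey; nlinarith [hkey]
  have hp : (0:ℝ) < (1/4 : ℝ) ^ L := by positivity
  refine ⟨⟨by rw [hexpr]; positivity, ?_⟩, ?_⟩
  · rw [hexpr, hc]
    have : (u - 1/2)^2 ≤ 1/4 := by nlinarith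
    nlinarith
  · rw [← sawG_iter_half_iff L x hx, ← hu]
    constructor
    · intro h
      have h0 : (1/4 : ℝ) ^ L * (u - 1/2) ^ 2 = 0 := by rw [← hexpr]; linarith
      have : (u - 1/2)^2 = 0 := by
        rcases mul_eq_zero.mp h0 with h' | h'
        · exact absurd h' (ne_of_gt hp)
        · exact h'
      have := pow_eq_zero_iff (n := 2) (by norm_num) |>.mp this
      linarith
    · intro h
      have : (u - 1/2)^2 = 0 := by rw [h]; ring
      nlinarith [hexpr]
end

section
/- On each interval [i/2^L, (i+1)/2^L], the shifted sawtooth approximation F^L(x) − 2^{−2L−2} is affine and coincides with the tangent line to x² at the midpoint i/2^L + 1/2^{L+1}. -/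
lemma sawG_iter (L : ℕ) : ∀ i : ℕ, i < 2 ^ L → ∀ x : ℝ,
    x ∈ Set.Icc ((i : ℝ) / 2 ^ L) (((i : ℝ) + 1) / 2 ^ L) →
    sawG^[L] x = if Even i then 2 ^ L * x - i else (i + 1) - 2 ^ L * x := by
  induction L with
  | zero =>
    intro i hi x hx
    interval_cases i
    simp
  | succ L IH =>
    intro i hi x hx
    have h2L : (0:ℝ) < 2 ^ L := by positivity
    obtain ⟨hx1, hx2⟩ := hx
    rw [div_le_iff₀ (by positivity)] at hx1
    rw [le_div_iff₀ (by positivity)] at hx2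
    push_cast [pow_succ] at hx1 hx2
    rcases Nat.even_or_odd i with ⟨i', rfl⟩ | ⟨i', rfl⟩
    · -- i = i' + i' = 2 i'
      have hi' : i' < 2 ^ L := by omega
      have hmem : x ∈ Set.Icc ((i' : ℝ) / 2 ^ L) (((i' : ℝ) + 1) / 2 ^ L) := by
        constructor
        · rw [div_le_iff₀ h2L]; push_cast at hx1 ⊢; nlinarith
        · rw [le_div_iff₀ h2L]; push_cast at hx2 ⊢; nlinarith
      rw [Function.iterate_succ_apply', IH i' hi' x hmem]
      by_cases h' : Even i'
      · simp only [h', if_true, if_pos (Even.add_self i')]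
        rw [sawG, min_eq_left (by push_cast at hx2 ⊢; obtain ⟨k, rfl⟩ := h'; nlinarith)]
        push_cast; ring
      · simp only [h', if_false, if_pos (Even.add_self i')]
        rw [sawG, min_eq_right (by push_cast at hx2 ⊢; obtain ⟨k, hk⟩ := Nat.not_even_iff_odd.mp h'; subst hk; nlinarith)]
        push_cast; ring
    · -- i = 2 i' + 1
      have hi' : i' < 2 ^ L := by omega
      have hodd : ¬ Even (2 * i' + 1) := by simp [parity_simps]
      have hmem : x ∈ Set.Icc ((i' : ℝ) / 2 ^ L) (((i' : ℝ) + 1) / 2 ^ L) := by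
        constructor
        · rw [div_le_iff₀ h2L]; push_cast at hx1 ⊢; nlinarith
        · rw [le_div_iff₀ h2L]; push_cast at hx2 ⊢; nlinarith
      rw [Function.iterate_succ_apply', IH i' hi' x hmem]
      by_cases h' : Even i'
      · simp only [h', if_true, if_neg hodd]
        rw [sawG, min_eq_right (by push_cast at hx1 ⊢; obtain ⟨k, rfl⟩ := h'; nlinarith)]
        push_cast; ring
      · simp only [h', if_false, if_neg hodd]
        rw [sawG, min_eq_left (by push_cast at hx1 ⊢; obtain ⟨k, hk⟩ := Nat.not_even_iff_odd.mp h'; subst hk; nlinarith)]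
        push_cast; ring

lemma two_zpow_neg_two (j : ℕ) : (2:ℝ) ^ (-(2 * (j : ℤ))) = ((4:ℝ) ^ j)⁻¹ := by
  rw [zpow_neg]
  congr 1
  rw [show (4:ℝ) = 2 ^ 2 by norm_num, ← pow_mul, ← zpow_natCast]
  push_cast
  ring_nf

lemma sawF_eq (L : ℕ) : ∀ i : ℕ, i < 2 ^ L → ∀ x : ℝ,
    x ∈ Set.Icc ((i : ℝ) / 2 ^ L) (((i : ℝ) + 1) / 2 ^ L) →
    sawF L x = (2 * i + 1) / 2 ^ L * x - i * (i + 1) / 4 ^ L := by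
  induction L with
  | zero =>
    intro i hi x hx
    interval_cases i
    simp [sawF]
  | succ L IH =>
    intro i hi x hx
    have h2L : (0:ℝ) < 2 ^ L := by positivity
    have h4L : (0:ℝ) < 4 ^ L := by positivity
    have hsplit : sawF (L + 1) x = sawF L x - ((4:ℝ) ^ (L+1))⁻¹ * sawG^[L+1] x := by
      rw [sawF, sawF, Finset.sum_Icc_succ_top (by omega : 1 ≤ L + 1), two_zpow_neg_two]
      ring
    obtain ⟨hx1, hx2⟩ := hx
    have hx1' : (i:ℝ) ≤ 2 ^ L * 2 * x := by
      rw [div_le_iff₀ (by positivity)] at hx1; push_cast [pow_succ] at hx1; linarith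
    have hx2' : 2 ^ L * 2 * x ≤ (i:ℝ) + 1 := by
      rw [le_div_iff₀ (by positivity)] at hx2; push_cast [pow_succ] at hx2; linarith
    have hG := sawG_iter (L + 1) i hi x ⟨hx1, hx2⟩
    rcases Nat.even_or_odd i with ⟨i', rfl⟩ | ⟨i', rfl⟩
    · have hi' : i' < 2 ^ L := by omega
      have hmem : x ∈ Set.Icc ((i' : ℝ) / 2 ^ L) (((i' : ℝ) + 1) / 2 ^ L) := by
        constructor
        · rw [div_le_iff₀ h2L]; push_cast at hx1'; nlinarith
        · rw [le_div_iff₀ h2L]; push_cast at hx2'; nlinarith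
      rw [hsplit, IH i' hi' x hmem, hG]
      rw [if_pos (Even.add_self i')]
      have e4 : (4:ℝ) ^ (L+1) = 4 ^ L * 4 := by ring
      have e2 : (2:ℝ) ^ (L+1) = 2 ^ L * 2 := by ring
      have e24 : (2:ℝ) ^ L * 2 ^ L = 4 ^ L := by
        rw [← mul_pow]; norm_num
      push_cast [e4, e2]
      field_simp
      rw [← e24]; ring
    · have hi' : i' < 2 ^ L := by omega
      have hodd : ¬ Even (2 * i' + 1) := by simp [parity_simps]
      have hmem : x ∈ Set.Icc ((i' : ℝ) / 2 ^ L) (((i' : ℝ) + 1) / 2 ^ L) := by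
        constructor
        · rw [div_le_iff₀ h2L]; push_cast at hx1'; nlinarith
        · rw [le_div_iff₀ h2L]; push_cast at hx2'; nlinarith
      rw [hsplit, IH i' hi' x hmem, hG, if_neg hodd]
      have e24 : (2:ℝ) ^ L * 2 ^ L = 4 ^ L := by
        rw [← mul_pow]; norm_num
      push_cast [pow_succ]
      field_simp
      rw [← e24]; ring


/-- On each interval `[i/2^L, (i+1)/2^L]`, the shifted sawtooth approximation
`F^L(x) - 2^{-2L-2}` coincides with the tangent line `x ↦ 2mx - m²` to `x²`
at the midpoint `m = i/2^L + 1/2^{L+1}`; in particular it is affine there. -/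
theorem sawF_shifted_tangent (L i : ℕ) (hi : i < 2 ^ L) (x : ℝ)
    (hx : x ∈ Set.Icc ((i : ℝ) / 2 ^ L) (((i : ℝ) + 1) / 2 ^ L)) :
    sawF L x - (2 : ℝ) ^ (-(2 * (L : ℤ)) - 2) =
      2 * ((i : ℝ) / 2 ^ L + 1 / 2 ^ (L + 1)) * x -
        ((i : ℝ) / 2 ^ L + 1 / 2 ^ (L + 1)) ^ 2 := by
  have h2L : (0:ℝ) < 2 ^ L := by positivity
  have h4L : (0:ℝ) < 4 ^ L := by positivity
  have e24 : (2:ℝ) ^ L * 2 ^ L = 4 ^ L := by rw [← mul_pow]; norm_num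
  have hz : (2:ℝ) ^ (-(2 * (L : ℤ)) - 2) = ((4:ℝ) ^ L)⁻¹ / 4 := by
    rw [show -(2 * (L:ℤ)) - 2 = -(2 * (L:ℤ)) + (-2) by ring, zpow_add₀ (by norm_num : (2:ℝ) ≠ 0),
      two_zpow_neg_two]
    norm_num
    ring
  rw [sawF_eq L i hi x hx, hz, pow_succ]
  field_simp
  rw [← e24]; ring
end

section
/- Let the sawtooth epigraph relaxation Q^L be the set of (x, z) ∈ [0,1] × ℝ such that z ≥ F^j(x) − 2^{−2j−2} for all j = 0,…,L, z ≥ 0, and z ≥ 2x − 1. Then the maximum underestimation error sup over (x,z) ∈ Q^L with z ≤ x² of (x² − z) equals 2^{−2L−4}. -/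
lemma sawF_zero (x : ℝ) : sawF 0 x = x := by simp [sawF]

lemma sawF_succ (j : ℕ) (x : ℝ) :
    sawF (j+1) x = sawF j x - (2:ℝ) ^ (-(2 * ((j:ℤ)+1))) * sawG^[j+1] x := by
  unfold sawF
  rw [Finset.sum_Icc_succ_top (by omega : 1 ≤ j+1)]
  push_cast
  ring

lemma two_zpow_eq (j : ℕ) : (2:ℝ) ^ (-(2 * (j:ℤ)) - 2) = 1 / (4 * 4^j) := by
  have h : (-(2*(j:ℤ)) - 2) = -((2*j+2 : ℕ) : ℤ) := by push_cast; ring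
  rw [h, zpow_neg, zpow_natCast, pow_add, pow_mul]
  norm_num
  ring

lemma two_zpow_eq' (j : ℕ) : (2:ℝ) ^ (-(2 * ((j:ℤ)+1))) = 1 / (4 * 4^j) := by
  have h : (-(2*((j:ℤ)+1))) = -(2*(j:ℤ)) - 2 := by ring
  rw [h, two_zpow_eq]

lemma four_pow_eq (j : ℕ) : (4:ℝ)^j = 2^j * 2^j := by
  rw [← mul_pow]; norm_num

lemma sawF_interp (j : ℕ) : ∀ t : ℕ, t < 2^j → ∀ x : ℝ,
    (t:ℝ)/2^j ≤ x → x ≤ ((t:ℝ)+1)/2^j →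
    (sawG^[j] x = if Even t then 2^j * x - t else ((t:ℝ)+1) - 2^j * x) ∧
    sawF j x = (2*(t:ℝ)+1)/2^j * x - (t:ℝ)*((t:ℝ)+1)/4^j := by
  induction j with
  | zero =>
    intro t ht x h1 h2
    interval_cases t
    simp [sawF_zero]
  | succ j ih =>
    intro t' ht' x h1 h2
    have hp : (0:ℝ) < 2^j := by positivity
    have hp1 : (0:ℝ) < 2^(j+1) := by positivity
    have hps : (2:ℝ)^(j+1) = 2^j * 2 := pow_succ 2 j
    have h1' : (t':ℝ) ≤ x * 2^(j+1) := (div_le_iff₀ hp1).mp h1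
    have h2' : x * 2^(j+1) ≤ (t':ℝ)+1 := (le_div_iff₀ hp1).mp h2
    have key : ∀ t : ℕ, (t' = 2*t ∨ t' = 2*t+1) → t < 2^j →
        (sawG^[j+1] x = if Even t' then 2^(j+1) * x - t' else ((t':ℝ)+1) - 2^(j+1) * x) ∧
        sawF (j+1) x = (2*(t':ℝ)+1)/2^(j+1) * x - (t':ℝ)*((t':ℝ)+1)/4^(j+1) := by
      intro t hcase ht
      have hx1 : (t:ℝ)/2^j ≤ x := by
        rw [div_le_iff₀ hp]
        rcases hcase with h | h <;> (subst h; push_cast at h1' ⊢; nlinarith)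
      have hx2 : x ≤ ((t:ℝ)+1)/2^j := by
        rw [le_div_iff₀ hp]
        rcases hcase with h | h <;> (subst h; push_cast at h2' ⊢; nlinarith)
      obtain ⟨hG, hF⟩ := ih t ht x hx1 hx2
      have hGs : sawG^[j+1] x = (if Even t' then 2^(j+1) * x - t' else ((t':ℝ)+1) - 2^(j+1) * x) := by
        rw [Function.iterate_succ_apply', hG]
        rcases Nat.even_or_odd t with hpar | hpar
        · rw [if_pos hpar]
          rcases hcase with h | h
          · subst h
            rw [if_pos (even_two_mul t)]
            have hu : 2^j * x - (t:ℝ) ≤ 1/2 := by push_cast at h2'; nlinarith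
            unfold sawG
            rw [min_eq_left (by linarith)]
            push_cast; rw [hps]; ring
          · subst h
            rw [if_neg (by simp [parity_simps] : ¬ Even (2*t+1))]
            have hu : 1/2 ≤ 2^j * x - (t:ℝ) := by push_cast at h1'; nlinarith
            unfold sawG
            rw [min_eq_right (by linarith)]
            push_cast; rw [hps]; ring
        · rw [if_neg (Nat.not_even_iff_odd.mpr hpar)]
          rcases hcase with h | h
          · subst h
            rw [if_pos (even_two_mul t)]
            have hu : 1/2 ≤ ((t:ℝ)+1) - 2^j * x := by push_cast at h2'; nlinarith
            unfold sawG
            rw [min_eq_right (by linarith)]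
            push_cast; rw [hps]; ring
          · subst h
            rw [if_neg (by simp [parity_simps] : ¬ Even (2*t+1))]
            have hu : ((t:ℝ)+1) - 2^j * x ≤ 1/2 := by push_cast at h1'; nlinarith
            unfold sawG
            rw [min_eq_left (by linarith)]
            push_cast; rw [hps]; ring
      refine ⟨hGs, ?_⟩
      rw [sawF_succ, two_zpow_eq', hGs, hF]
      rcases hcase with h | h <;> subst h
      · rw [if_pos (even_two_mul t)]
        push_cast
        rw [four_pow_eq, four_pow_eq, hps]
        field_simp
        ring
      · rw [if_neg (by simp [parity_simps] : ¬ Even (2*t+1))]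
        push_cast
        rw [four_pow_eq, four_pow_eq, hps]
        field_simp
        ring
    rcases Nat.even_or_odd t' with hpar | hpar
    · obtain ⟨t, ht⟩ := hpar
      exact key t (Or.inl (by omega)) (by omega)
    · obtain ⟨t, ht⟩ := hpar
      exact key t (Or.inr (by omega)) (by omega)

lemma two_zpow_eq4 (L : ℕ) : (2:ℝ) ^ (-(2 * (L:ℤ)) - 4) = (1/(2*2^(L+1)))^2 := by
  have h : (-(2*(L:ℤ)) - 4) = -((2*L+4 : ℕ) : ℤ) := by push_cast; ring
  have e1 : (2:ℝ)*2^(L+1) = 2^(L+2) := by rw [pow_succ]; ring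
  have e2 : ((2:ℝ)^(L+2))^2 = 2^(2*L+4) := by rw [← pow_mul]; congr 1; omega
  rw [h, zpow_neg, zpow_natCast, e1, div_pow, one_pow, e2, one_div]

lemma tangent_bound (j t : ℕ) (ht : t < 2^j) (x z : ℝ)
    (hx1 : (t:ℝ)/2^j ≤ x) (hx2 : x ≤ ((t:ℝ)+1)/2^j)
    (hz : sawF j x - (2:ℝ)^(-(2*(j:ℤ))-2) ≤ z) :
    x^2 - z ≤ (x - (2*(t:ℝ)+1)/2^(j+1))^2 := by
  obtain ⟨-, hF⟩ := sawF_interp j t ht x hx1 hx2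
  rw [hF, two_zpow_eq] at hz
  have hp : (0:ℝ) < 2^j := by positivity
  have key : (2*(t:ℝ)+1)/2^j * x - (t:ℝ)*((t:ℝ)+1)/4^j - 1/(4*4^j)
      = 2*((2*(t:ℝ)+1)/2^(j+1))*x - ((2*(t:ℝ)+1)/2^(j+1))^2 := by
    rw [four_pow_eq, pow_succ]
    field_simp
    ring
  rw [key] at hz
  nlinarith [hz]

set_option maxHeartbeats 1600000 in
/-- The maximum underestimation error of the depth-`L` sawtooth epigraph
relaxation `Q^L` for `z ≥ x²` on `[0, 1]` equals `2^{-2L-4}`: the supremum of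
`x² - z` over all `(x, z)` with `x ∈ [0,1]`, `z ≥ F^j(x) - 2^{-2j-2}` for
`j = 0, …, L`, `z ≥ 0`, `z ≥ 2x - 1` and `z ≤ x²` is attained and equals
`2^{-2L-4}`. -/
theorem sawtooth_epigraph_max_error (L : ℕ) :
    IsGreatest {e : ℝ | ∃ x z : ℝ, x ∈ Set.Icc (0 : ℝ) 1 ∧
        (∀ j : ℕ, j ≤ L → sawF j x - (2 : ℝ) ^ (-(2 * (j : ℤ)) - 2) ≤ z) ∧
        0 ≤ z ∧ 2 * x - 1 ≤ z ∧ z ≤ x ^ 2 ∧ e = x ^ 2 - z}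
      ((2 : ℝ) ^ (-(2 * (L : ℤ)) - 4)) := by
  have hNpos : (0:ℝ) < 2^(L+1) := by positivity
  have hNone : (1:ℝ) ≤ 2^(L+1) := by
    simpa using pow_le_pow_right₀ (by norm_num : (1:ℝ) ≤ 2) (Nat.zero_le (L+1))
  constructor
  · -- membership: x = 1/(2*2^(L+1)), z = 0
    refine ⟨1/(2*2^(L+1)), 0, ⟨by positivity, ?_⟩, ?_, le_refl 0, ?_, by positivity, ?_⟩
    · rw [div_le_one (by positivity)]
      linarith
    · intro j hj
      have hj2 : (0:ℝ) < 2^j := by positivity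
      have hle : (2:ℝ)^j * 2 ≤ 2^(L+1) := by
        rw [← pow_succ]
        exact pow_le_pow_right₀ (by norm_num) (by omega)
      obtain ⟨-, hF⟩ := sawF_interp j 0 (pow_pos (by norm_num) j) (1/(2*2^(L+1)))
        (by simp only [Nat.cast_zero, zero_div]; positivity)
        (by rw [div_le_div_iff₀ (by positivity) hj2]; push_cast; nlinarith)
      rw [hF, two_zpow_eq]
      have key : (1:ℝ)/2^j * (1/(2*2^(L+1))) ≤ 1/(4*4^j) := by
        rw [four_pow_eq, div_mul_div_comm, one_mul,
          div_le_div_iff₀ (by positivity) (by positivity)]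
        nlinarith
      have e0 : (2*((0:ℕ):ℝ)+1)/2^j * (1/(2*2^(L+1))) - ((0:ℕ):ℝ)*(((0:ℕ):ℝ)+1)/4^j
          = 1/2^j * (1/(2*2^(L+1))) := by push_cast; ring
      rw [e0]
      linarith [key]
    · have hx : (1:ℝ)/(2*2^(L+1)) ≤ 1/2 := by
        rw [div_le_div_iff₀ (by positivity) (by norm_num : (0:ℝ) < 2)]
        nlinarith
      linarith
    · rw [two_zpow_eq4]
      ring
  · -- upper bound
    rintro e ⟨x, z, ⟨hx0, hx1⟩, hcon, hz0, hz1, hzx, rfl⟩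
    rw [two_zpow_eq4]
    set N : ℕ := 2^(L+1) with hN
    have hNr : ((N:ℝ)) = 2^(L+1) := by rw [hN]; push_cast; ring
    have hNrpos : (0:ℝ) < (N:ℝ) := by rw [hNr]; positivity
    set k : ℕ := ⌊(N:ℝ)*x + 1/2⌋₊ with hk
    clear_value k
    have hk1 : (k:ℝ) ≤ (N:ℝ)*x + 1/2 := by
      rw [hk]; exact Nat.floor_le (by nlinarith [mul_nonneg hNrpos.le hx0])
    have hk2 : (N:ℝ)*x + 1/2 < k + 1 := by
      rw [hk]; exact Nat.lt_floor_add_one _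
    have hxlow : x ≤ (k:ℝ)/N + 1/(2*N) := by
      have he : ((k:ℝ))/N + 1/(2*N) = ((k:ℝ) + 1/2)/N := by field_simp
      rw [he, le_div_iff₀ hNrpos]
      nlinarith
    have hxhigh : (k:ℝ)/N - 1/(2*N) ≤ x := by
      have he : ((k:ℝ))/N - 1/(2*N) = ((k:ℝ) - 1/2)/N := by field_simp
      rw [he, div_le_iff₀ hNrpos]
      nlinarith
    have hkN : k ≤ N := by
      by_contra hcon'
      push_neg at hcon'
      have : (N:ℝ) + 1 ≤ (k:ℝ) := by exact_mod_cast hcon'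
      nlinarith
    rcases Nat.eq_zero_or_pos k with hk0 | hkpos
    · -- k = 0 : use z ≥ 0
      clear hcon hk hxlow hxhigh
      rw [hk0] at hk2
      push_cast at hk2
      have hNx : (N:ℝ)*x ≤ 1/2 := by linarith
      have h1 : ((N:ℝ)*x)^2 ≤ (1/2)^2 :=
        pow_le_pow_left₀ (mul_nonneg hNrpos.le hx0) hNx 2
      have h2 : x^2 = ((N:ℝ)*x)^2 / (N:ℝ)^2 := by field_simp
      have h3 : (1/(2*(N:ℝ)))^2 = (1/2)^2/(N:ℝ)^2 := by field_simp
      rw [← hNr]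
      rw [h3]
      have : x^2 ≤ (1/2)^2/(N:ℝ)^2 := by
        rw [h2]
        exact div_le_div_of_nonneg_right h1 (by positivity) |>.trans_eq rfl
      linarith
    rcases eq_or_lt_of_le hkN with hkeq | hklt
    · -- k = N : use z ≥ 2x - 1
      clear hcon hk hk2 hxlow hxhigh
      rw [hkeq] at hk1
      have hNx : (N:ℝ)*(1-x) ≤ 1/2 := by nlinarith
      have hNx0 : (0:ℝ) ≤ (N:ℝ)*(1-x) := by nlinarith
      have h1 : ((N:ℝ)*(1-x))^2 ≤ (1/2)^2 := pow_le_pow_left₀ hNx0 hNx 2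
      have h2 : (1-x)^2 = ((N:ℝ)*(1-x))^2 / (N:ℝ)^2 := by field_simp
      have h3 : (1/(2*(N:ℝ)))^2 = (1/2)^2/(N:ℝ)^2 := by field_simp
      rw [← hNr, h3]
      have h4 : (1-x)^2 ≤ (1/2)^2/(N:ℝ)^2 := by
        rw [h2]
        exact div_le_div_of_nonneg_right h1 (by positivity)
      nlinarith
    · -- 0 < k < N : tangent at k/N
      obtain ⟨ee, m, hm2, hkm⟩ := Nat.exists_eq_pow_mul_and_not_dvd
        (Nat.pos_iff_ne_zero.mp hkpos) 2 (by norm_num)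
      have hmodd : m % 2 = 1 := Nat.not_even_iff.mp (fun h => hm2 h.two_dvd)
      obtain ⟨t, hmt⟩ : ∃ t, m = 2*t+1 := ⟨m/2, by omega⟩
      have heL : ee ≤ L := by
        by_contra hcon'
        push_neg at hcon'
        have h1 : 2^(L+1) ≤ 2^ee := Nat.pow_le_pow_right (by norm_num) (by omega)
        have h2 : 2^ee ≤ k := by rw [hkm]; exact Nat.le_mul_of_pos_right _ (by omega)
        have h3 : k < 2^(L+1) := hklt
        omega
      obtain ⟨j, hje⟩ : ∃ j, ee + (j+1) = L + 1 := ⟨L - ee, by omega⟩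
      have hlt : 2*t+1 < 2^(j+1) := by
        have hsplit : 2^(L+1) = 2^ee * 2^(j+1) := by rw [← pow_add, hje]
        have : 2^ee * m < 2^ee * 2^(j+1) := by rw [← hkm, ← hsplit]; exact hklt
        have := Nat.lt_of_mul_lt_mul_left this
        omega
      have ht : t < 2^j := by
        have : (2:ℕ)^(j+1) = 2*2^j := by rw [pow_succ]; ring
        omega
      have hkr : (k:ℝ) = 2^ee * (2*(t:ℝ)+1) := by rw [hkm, hmt]; push_cast; ring
      have hNr2 : (N:ℝ) = 2^ee * 2^(j+1) := by rw [hNr, ← pow_add, hje]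
      have hmid : (k:ℝ)/N = (2*(t:ℝ)+1)/2^(j+1) := by
        rw [hkr, hNr2, mul_div_mul_left _ _ (by positivity : (2:ℝ)^ee ≠ 0)]
      have h2j : (2:ℝ)^(j+1) ≤ 2*(N:ℝ) := by
        rw [hNr, ← pow_succ']
        exact pow_le_pow_right₀ (by norm_num) (by omega)
      have hhalf : 1/(2*(N:ℝ)) ≤ 1/2^(j+1) :=
        one_div_le_one_div_of_le (by positivity) h2j
      have hpj : (0:ℝ) < 2^j := by positivity
      have hend1 : ((t:ℝ))/2^j = (2*(t:ℝ)+1)/2^(j+1) - 1/2^(j+1) := by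
        rw [pow_succ]; field_simp; ring
      have hend2 : ((t:ℝ)+1)/2^j = (2*(t:ℝ)+1)/2^(j+1) + 1/2^(j+1) := by
        rw [pow_succ]; field_simp; ring
      have hx1' : (t:ℝ)/2^j ≤ x := by
        rw [hend1, ← hmid]; linarith
      have hx2' : x ≤ ((t:ℝ)+1)/2^j := by
        rw [hend2, ← hmid]; linarith
      have hb := tangent_bound j t ht x z hx1' hx2' (hcon j (by omega))
      rw [← hmid] at hb
      calc x^2 - z ≤ (x - (k:ℝ)/N)^2 := hb
        _ ≤ (1/(2*(N:ℝ)))^2 := sq_le_sq' (by linarith) (by linarith)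
        _ = (1/(2*2^(L+1)))^2 := by rw [hNr]
end
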